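/- Let H be a Hilbert space, let P and Q be orthogonal projections on H, let φ be a unit vector with P φ = φ, and let φ̂ be a unit vector in the range of Q such that Q φ = ⟨φ, φ̂⟩·φ̂ and ⟨φ, φ̂⟩ ≥ 0. Then ‖φ̂ − φ‖² ≤ 2·(1 − ⟨φ, φ̂⟩²) ≤ 2·‖Q − P‖². (This is the eigenvector alignment inequality in the paper's proof of Lemma C.2, bounding the distance between an eigenvector and its analogue for a perturbed operator by the distance between the corresponding spectral projections.) -/
import Mathlib


open scoped InnerProductSpace

/-- eigenvector alignment inequality in the proof of Lemma C.2:
if P, Q are orthogonal projections, φ a unit vector with P φ = φ, and φ̂ a unit vector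
in the range of Q with Q φ = ⟨φ, φ̂⟩ φ̂ and ⟨φ, φ̂⟩ ≥ 0, then
‖φ̂ − φ‖² ≤ 2(1 − ⟨φ, φ̂⟩²) ≤ 2 ‖Q − P‖². -/
theorem eigenvector_alignment
    {H : Type*} [NormedAddCommGroup H] [InnerProductSpace ℝ H] [CompleteSpace H]
    (P Q : H →L[ℝ] H)
    (hP_sa : IsSelfAdjoint P) (hP_idem : P ∘L P = P)
    (hQ_sa : IsSelfAdjoint Q) (hQ_idem : Q ∘L Q = Q)
    (φ φhat : H) (hφ : ‖φ‖ = 1) (hφhat : ‖φhat‖ = 1)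
    (hPφ : P φ = φ) (hQφhat : Q φhat = φhat)
    (hQφ : Q φ = ⟪φ, φhat⟫_ℝ • φhat)
    (hpos : 0 ≤ ⟪φ, φhat⟫_ℝ) :
    ‖φhat - φ‖ ^ 2 ≤ 2 * (1 - ⟪φ, φhat⟫_ℝ ^ 2) ∧
    2 * (1 - ⟪φ, φhat⟫_ℝ ^ 2) ≤ 2 * ‖Q - P‖ ^ 2 := by
  set c : ℝ := ⟪φ, φhat⟫_ℝ with hc
  have hc1 : c ≤ 1 := by
    have := real_inner_le_norm φ φhat
    rwa [hφ, hφhat, one_mul] at this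
  constructor
  · have h1 : ‖φhat - φ‖ ^ 2 = 2 - 2 * c := by
      have hsym : ⟪φhat, φ⟫_ℝ = c := by rw [real_inner_comm]
      rw [norm_sub_sq_real, hφ, hφhat, hsym]
      ring
    rw [h1]
    nlinarith
  · have h2 : (Q - P) φ = c • φhat - φ := by
      simp [ContinuousLinearMap.sub_apply, hQφ, hPφ]
    have h3 : ‖(Q - P) φ‖ ^ 2 = 1 - c ^ 2 := by
      have hsym : ⟪φhat, φ⟫_ℝ = c := by rw [real_inner_comm]
      rw [h2, norm_sub_sq_real, norm_smul, real_inner_smul_left, hφ, hφhat, hsym]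
      simp [abs_of_nonneg hpos]
      ring
    have h4 : ‖(Q - P) φ‖ ≤ ‖Q - P‖ := by
      have := (Q - P).le_opNorm φ
      rwa [hφ, mul_one] at this
    have h5 : ‖(Q - P) φ‖ ^ 2 ≤ ‖Q - P‖ ^ 2 :=
      pow_le_pow_left₀ (norm_nonneg _) h4 2
    rw [h3] at h5
    linarith
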